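/- For every prime p ≥ 3 and every perfect square n = N^2 with N ≡ 0 (mod p(p-1)), there exist p induced subgraphs G_0, G_1, …, G_{p-1} of the Hamming graph H(n,p) whose vertex sets partition the vertex set of H(n,p), such that Σ_{k=0}^{p-1} |ρ(V(G_k))|·ε^k ≠ 0 and (p-1)·n − min{δ(G_0), δ(G_1), …, δ(G_{p-1})} = (p-1)·√n. -/

import Mathlib

open scoped Classical

noncomputable section

/-- The primitive `m`-th root of unity `ε = e^{2πi/m}`. -/
def primRoot (m : ℕ) : ℂ := Complex.exp (2 * Real.pi * Complex.I / m)

/-- The bijection `k ↦ ε^k` from `ZMod m` onto the set `U_m` of `m`-th roots of unity;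
vectors of `U_m^n` are modelled by their exponent vectors in `(ZMod m)^n`. -/
def uRoot (m : ℕ) (k : ZMod m) : ℂ := primRoot m ^ k.val

/-- `F` represents the `m`-ary function `U_m^n → U_m` given in exponents by `g`,
i.e. the function `(ε^{x 1}, …, ε^{x n}) ↦ ε^{g x}`. -/
def RepresentsU (m n : ℕ) (F : MvPolynomial (Fin n) ℂ)
    (g : (Fin n → ZMod m) → ZMod m) : Prop :=
  ∀ x : Fin n → ZMod m, MvPolynomial.eval (fun i => uRoot m (x i)) F = uRoot m (g x)

/-- Degree of the `m`-ary function `U_m^n → U_m` given in exponents by `g`. -/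
def degU (m n : ℕ) (g : (Fin n → ZMod m) → ZMod m) : ℕ :=
  sInf {d | ∃ F : MvPolynomial (Fin n) ℂ, RepresentsU m n F g ∧ F.totalDegree = d}

/-- Local sensitivity of the `m`-ary function `U_m^n → U_m` given in exponents by `g`. -/
def localSensU (m n : ℕ) [NeZero m] (g : (Fin n → ZMod m) → ZMod m)
    (x : Fin n → ZMod m) : ℕ :=
  (Finset.univ.filter fun y : Fin n → ZMod m => hammingDist x y = 1 ∧ g y ≠ g x).card

/-- Sensitivity of the `m`-ary function `U_m^n → U_m` given in exponents by `g`. -/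
def sensU (m n : ℕ) [NeZero m] (g : (Fin n → ZMod m) → ZMod m) : ℕ :=
  Finset.univ.sup (localSensU m n g)

/-- Degree of the vertex `v` in the subgraph of the Hamming graph induced on `V`:
the number of vertices of `V` at Hamming distance exactly `1` from `v`. -/
def indDeg {ι α : Type*} [Fintype ι] (V : Finset (ι → α)) (v : ι → α) : ℕ :=
  (V.filter fun w => hammingDist v w = 1).card

/-- Minimum degree `δ` of the subgraph of the Hamming graph induced on `V`
(it is `⊤ = +∞` for the empty graph). -/
def minDeg {ι α : Type*} [Fintype ι] (V : Finset (ι → α)) : ℕ∞ :=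
  V.inf fun v => (indDeg V v : ℕ∞)

/-- Maximum degree `Δ` of the subgraph of the Hamming graph induced on `V`. -/
def maxDeg {ι α : Type*} [Fintype ι] (V : Finset (ι → α)) : ℕ :=
  V.sup fun v => indDeg V v

/-- The rotation `ρ` applied to the part `V k` of a partition of `U_m^n` (in exponent
coordinates): `x ∈ ρ(V)_k` iff `x ∈ C_{ε^j} ∩ V_{ε^{k-j}}` for some `j`, where
`C_{ε^j}` consists of the vertices whose entries multiply to `ε^j`, i.e. whose exponents
sum to `j`. -/
def rho (m n : ℕ) [NeZero m] (V : ZMod m → Finset (Fin n → ZMod m)) (k : ZMod m) :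
    Finset (Fin n → ZMod m) :=
  Finset.univ.filter fun x => x ∈ V (k - ∑ i, x i)

section Aux

variable {p : ℕ} [NeZero p]

private def gridE (N : ℕ) : Fin N × Fin N ≃ Fin (N ^ 2) :=
  finProdFinEquiv.trans (finCongr (by ring))

private def AA (p N : ℕ) [NeZero p] : Finset (Fin (N ^ 2) → ZMod p) :=
  Finset.univ.filter fun x => ∃ j : Fin N, ∀ i : Fin N, x (gridE N (j, i)) = 0

private lemma mem_AA {N : ℕ} {x : Fin (N ^ 2) → ZMod p} :
    x ∈ AA p N ↔ ∃ j : Fin N, ∀ i : Fin N, x (gridE N (j, i)) = 0 := by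
  simp [AA]

private lemma hdc {n : ℕ} (d : ∀ _ : Fin n, DecidableEq (ZMod p)) (x y : Fin n → ZMod p) :
    @hammingDist (Fin n) (fun _ => ZMod p) _ d x y = hammingDist x y := by
  congr!

private lemma hd_update {n : ℕ} (x : Fin n → ZMod p) (c : Fin n) (a : ZMod p) (h : a ≠ x c) :
    hammingDist x (Function.update x c a) = 1 := by
  unfold hammingDist
  rw [Finset.card_eq_one]
  refine ⟨c, ?_⟩
  ext i
  rcases eq_or_ne i c with rfl | hic
  · simp [Function.update_self]
    exact fun hh => h hh.symm
  · simp [Function.update_of_ne hic, hic]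

private lemma hd_one {n : ℕ} {x y : Fin n → ZMod p} (h : hammingDist x y = 1) :
    ∃ c, y c ≠ x c ∧ y = Function.update x c (y c) := by
  unfold hammingDist at h
  rw [Finset.card_eq_one] at h
  obtain ⟨c, hc⟩ := h
  have hmem : ∀ i : Fin n, x i ≠ y i ↔ i = c := by
    intro i
    constructor
    · intro hi
      have : i ∈ Finset.filter (fun i => x i ≠ y i) Finset.univ := by
        simp only [Finset.mem_filter, Finset.mem_univ, true_and]; exact hi
      rw [hc] at this; simpa using this
    · rintro rfl
      have : i ∈ Finset.filter (fun i => x i ≠ y i) Finset.univ := by rw [hc]; simp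
      simpa using this
  refine ⟨c, fun hh => ((hmem c).mpr rfl) hh.symm, ?_⟩
  funext i
  rcases eq_or_ne i c with rfl | hic
  · simp [Function.update_self]
  · rw [Function.update_of_ne hic]
    by_contra hne
    exact hic ((hmem i).mp fun hh => hne hh.symm)

private lemma update_inj {n : ℕ} (x : Fin n → ZMod p) {c c' : Fin n} {a a' : ZMod p}
    (ha : a ≠ x c) (h : Function.update x c a = Function.update x c' a') :
    c = c' ∧ a = a' := by
  have hc : c = c' := by
    by_contra hcc
    have h1 := congrFun h c
    rw [Function.update_self, Function.update_of_ne hcc] at h1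
    exact ha h1
  subst hc
  have h1 := congrFun h c
  rw [Function.update_self, Function.update_self] at h1
  exact ⟨rfl, h1⟩

private lemma card_mul_le_indDeg {n : ℕ} (V : Finset (Fin n → ZMod p))
    (x : Fin n → ZMod p) (C : Finset (Fin n))
    (hm : ∀ c ∈ C, ∀ b : ZMod p, b ≠ 0 → Function.update x c (x c + b) ∈ V) :
    C.card * (p - 1) ≤ indDeg V x := by
  unfold indDeg
  have hcard : (C ×ˢ (Finset.univ.erase (0 : ZMod p))).card = C.card * (p - 1) := by
    rw [Finset.card_product, Finset.card_erase_of_mem (Finset.mem_univ _),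
      Finset.card_univ, ZMod.card]
  rw [← hcard]
  apply Finset.card_le_card_of_injOn (fun cb => Function.update x cb.1 (x cb.1 + cb.2))
  · rintro ⟨c, b⟩ hcb
    rw [Finset.mem_coe, Finset.mem_product, Finset.mem_erase] at hcb
    have hb : b ≠ 0 := hcb.2.1
    have hne : x c + b ≠ x c := by
      intro hh; exact hb (by simpa using hh)
    rw [Finset.mem_coe, Finset.mem_filter]
    refine ⟨hm c hcb.1 b hb, ?_⟩
    rw [hdc]
    exact hd_update x c _ hne
  · rintro ⟨c, b⟩ hcb ⟨c', b'⟩ hcb' heq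
    simp only [Finset.coe_product, Set.mem_prod, Finset.mem_coe, Finset.mem_erase] at hcb hcb'
    have hb : b ≠ 0 := hcb.2.1
    have hne : x c + b ≠ x c := fun hh => hb (by simpa using hh)
    obtain ⟨h1, h2⟩ := update_inj x hne heq
    subst h1
    have hbb : b = b' := add_left_cancel h2
    simp [hbb]

private def diffC {n : ℕ} (x y : Fin n → ZMod p) (hn : 0 < n) : Fin n :=
  if h : ∃ c, y c ≠ x c then h.choose else ⟨0, hn⟩

private lemma diffC_spec {n : ℕ} {x y : Fin n → ZMod p} (hn : 0 < n)
    (h : hammingDist x y = 1) :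
    y (diffC x y hn) ≠ x (diffC x y hn) ∧
      y = Function.update x (diffC x y hn) (y (diffC x y hn)) := by
  obtain ⟨c₀, hc₀, hupd⟩ := hd_one h
  have hex : ∃ c, y c ≠ x c := ⟨c₀, hc₀⟩
  have hd : diffC x y hn = hex.choose := by rw [diffC, dif_pos hex]
  have hch : y hex.choose ≠ x hex.choose := hex.choose_spec
  have hcc : hex.choose = c₀ := by
    by_contra hne
    apply hch
    have := congrFun hupd hex.choose
    rw [Function.update_of_ne hne] at this
    exact this
  have heq : diffC x y hn = c₀ := hd.trans hcc
  rw [heq]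
  exact ⟨hc₀, hupd⟩

private lemma indDeg_le_card_mul {n : ℕ} (hn : 0 < n) (V : Finset (Fin n → ZMod p))
    (x : Fin n → ZMod p) (C : Finset (Fin n))
    (hm : ∀ y ∈ V, hammingDist x y = 1 → ∀ c : Fin n, y c ≠ x c → c ∈ C) :
    indDeg V x ≤ C.card * (p - 1) := by
  have hcard : (C ×ˢ (Finset.univ.erase (0 : ZMod p))).card = C.card * (p - 1) := by
    rw [Finset.card_product, Finset.card_erase_of_mem (Finset.mem_univ _),
      Finset.card_univ, ZMod.card]
  unfold indDeg
  rw [← hcard]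
  apply Finset.card_le_card_of_injOn
    (fun y => (diffC x y hn, y (diffC x y hn) - x (diffC x y hn)))
  · intro y hy
    rw [Finset.mem_coe, Finset.mem_filter] at hy
    rw [hdc] at hy
    obtain ⟨hne, _⟩ := diffC_spec hn hy.2
    rw [Finset.mem_coe, Finset.mem_product, Finset.mem_erase]
    exact ⟨hm y hy.1 hy.2 _ hne, sub_ne_zero.mpr hne, Finset.mem_univ _⟩
  · intro y hy y' hy' heq
    simp only [Finset.mem_coe, Finset.mem_filter] at hy hy'
    rw [hdc] at hy hy'
    obtain ⟨hne, hupd⟩ := diffC_spec hn hy.2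
    obtain ⟨hne', hupd'⟩ := diffC_spec hn hy'.2
    have h1 : diffC x y hn = diffC x y' hn := congrArg Prod.fst heq
    have h2 : y (diffC x y hn) - x (diffC x y hn)
        = y' (diffC x y' hn) - x (diffC x y' hn) := congrArg Prod.snd heq
    rw [← h1] at h2 hne' hupd'
    have h3 : y (diffC x y hn) = y' (diffC x y hn) := sub_left_injective h2
    rw [hupd, hupd', h3]

end Aux
section Aux2

variable {p : ℕ} [NeZero p]

private lemma grid_symm_fst {N : ℕ} (j i : Fin N) :
    ((gridE N).symm (gridE N (j, i))).1 = j := by simp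

private lemma grid_eta {N : ℕ} (c : Fin (N ^ 2)) :
    gridE N (((gridE N).symm c).1, ((gridE N).symm c).2) = c := by
  conv_rhs => rw [← (gridE N).apply_symm_apply c]

private lemma card_row (N : ℕ) (j : Fin N) :
    (Finset.univ.filter fun c : Fin (N ^ 2) => ((gridE N).symm c).1 = j).card = N := by
  have himg : (Finset.univ.filter fun c : Fin (N ^ 2) => ((gridE N).symm c).1 = j)
      = Finset.image (fun i => gridE N (j, i)) Finset.univ := by
    ext c
    simp only [Finset.mem_filter, Finset.mem_univ, true_and, Finset.mem_image]
    constructor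
    · intro h
      exact ⟨((gridE N).symm c).2, by rw [← h]; exact grid_eta c⟩
    · rintro ⟨i, rfl⟩
      exact grid_symm_fst j i
  rw [himg, Finset.card_image_of_injective _ (fun i i' h => by
    simpa using congrArg Prod.snd ((gridE N).injective h))]
  simp

private lemma card_offRow (N : ℕ) (j : Fin N) :
    (Finset.univ.filter fun c : Fin (N ^ 2) => ¬((gridE N).symm c).1 = j).card = N ^ 2 - N := by
  have h := Finset.card_filter_add_card_filter_not
    (s := (Finset.univ : Finset (Fin (N ^ 2)))) (fun c => ((gridE N).symm c).1 = j)
  rw [card_row] at h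
  rw [Finset.card_univ, Fintype.card_fin] at h
  omega

private lemma lbAA {N : ℕ} (x : Fin (N ^ 2) → ZMod p) (hx : x ∈ AA p N) :
    (N ^ 2 - N) * (p - 1) ≤ indDeg (AA p N) x := by
  obtain ⟨j₀, hj₀⟩ := mem_AA.mp hx
  have h := card_mul_le_indDeg (AA p N) x
    (Finset.univ.filter fun c => ¬((gridE N).symm c).1 = j₀) ?_
  · rwa [card_offRow] at h
  · intro c hc b hb
    rw [Finset.mem_filter] at hc
    rw [mem_AA]
    refine ⟨j₀, fun i => ?_⟩
    have hcc : gridE N (j₀, i) ≠ c := fun hh => hc.2 (by rw [← hh]; exact grid_symm_fst j₀ i)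
    rw [Function.update_of_ne hcc]
    exact hj₀ i

/-- choice of an all-zero row -/
private def zrow {N : ℕ} (hN : 0 < N) (y : Fin (N ^ 2) → ZMod p) : Fin N :=
  if h : ∃ j : Fin N, ∀ i : Fin N, y (gridE N (j, i)) = 0 then h.choose else ⟨0, hN⟩

private lemma zrow_spec {N : ℕ} (hN : 0 < N) {y : Fin (N ^ 2) → ZMod p}
    (hy : y ∈ AA p N) : ∀ i, y (gridE N (zrow hN y, i)) = 0 := by
  have h := mem_AA.mp hy
  rw [zrow, dif_pos h]
  exact h.choose_spec

private lemma nbrA_eq {N : ℕ} {x y : Fin (N ^ 2) → ZMod p}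
    (hx : x ∉ AA p N) (hd1 : hammingDist x y = 1) {j : Fin N}
    (hj : ∀ i, y (gridE N (j, i)) = 0) :
    y = fun c => if ((gridE N).symm c).1 = j then 0 else x c := by
  obtain ⟨c₀, hc₀, hupd⟩ := hd_one hd1
  have hrow : ((gridE N).symm c₀).1 = j := by
    by_contra hne
    apply hx
    rw [mem_AA]
    refine ⟨j, fun i => ?_⟩
    have hcc : gridE N (j, i) ≠ c₀ := fun hh => hne (by rw [← hh]; exact grid_symm_fst j i)
    have h2 := congrFun hupd (gridE N (j, i))
    rw [Function.update_of_ne hcc] at h2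
    rw [← h2]
    exact hj i
  funext c
  by_cases hcj : ((gridE N).symm c).1 = j
  · rw [if_pos hcj, ← grid_eta c]
    have : gridE N (((gridE N).symm c).1, ((gridE N).symm c).2)
        = gridE N (j, ((gridE N).symm c).2) := by rw [hcj]
    rw [this]
    exact hj _
  · rw [if_neg hcj]
    have hcc : c ≠ c₀ := fun hh => hcj (hh ▸ hrow)
    have h2 := congrFun hupd c
    rw [Function.update_of_ne hcc] at h2
    exact h2

private lemma crossing {N : ℕ} (hN : 0 < N) {x : Fin (N ^ 2) → ZMod p}
    (hx : x ∉ AA p N) : indDeg (AA p N) x ≤ N := by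
  unfold indDeg
  simp only [hdc]
  have h := Finset.card_le_card_of_injOn (t := (Finset.univ : Finset (Fin N)))
    (s := (AA p N).filter fun w => hammingDist x w = 1) (fun y => zrow hN y)
    (fun y _ => Finset.mem_univ _) ?_
  · simpa using h
  · intro y hy y' hy' heq
    simp only [Finset.mem_coe, Finset.mem_filter] at hy hy'
    have e1 := nbrA_eq hx hy.2 (zrow_spec hN hy.1)
    have e2 := nbrA_eq hx hy'.2 (zrow_spec hN hy'.1)
    have heq' : zrow hN y = zrow hN y' := heq
    rw [e1, e2, heq']

private def BB (p N : ℕ) [NeZero p] : Finset (Fin (N ^ 2) → ZMod p) :=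
  Finset.univ \ AA p N

private lemma mem_BB {N : ℕ} {x : Fin (N ^ 2) → ZMod p} :
    x ∈ BB p N ↔ x ∉ AA p N := by simp [BB]

private lemma deg_split {N : ℕ} (x : Fin (N ^ 2) → ZMod p) :
    indDeg (AA p N) x + indDeg (BB p N) x
      = indDeg (Finset.univ : Finset (Fin (N ^ 2) → ZMod p)) x := by
  unfold indDeg
  simp only [hdc]
  have h1 : (AA p N).filter (fun w => hammingDist x w = 1)
      = (Finset.univ.filter fun w => hammingDist x w = 1).filter (· ∈ AA p N) := by
    ext y; simp only [Finset.mem_filter, Finset.mem_univ, true_and]; tauto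
  have h2 : (BB p N).filter (fun w => hammingDist x w = 1)
      = (Finset.univ.filter fun w => hammingDist x w = 1).filter (fun y => ¬ y ∈ AA p N) := by
    ext y
    simp only [Finset.mem_filter, Finset.mem_univ, true_and, mem_BB]
    tauto
  rw [h1, h2]
  exact Finset.card_filter_add_card_filter_not _

private lemma lbBB {N : ℕ} (hN : 0 < N) (hp3 : 3 ≤ p) (x : Fin (N ^ 2) → ZMod p)
    (hx : x ∈ BB p N) : (N ^ 2 - N) * (p - 1) ≤ indDeg (BB p N) x := by
  have hxA : x ∉ AA p N := mem_BB.mp hx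
  have htot : N ^ 2 * (p - 1)
      ≤ indDeg (Finset.univ : Finset (Fin (N ^ 2) → ZMod p)) x := by
    have h := card_mul_le_indDeg (Finset.univ : Finset (Fin (N ^ 2) → ZMod p)) x
      Finset.univ (fun _ _ _ _ => Finset.mem_univ _)
    rwa [Finset.card_univ, Fintype.card_fin] at h
  have hcross : indDeg (AA p N) x ≤ N := crossing hN hxA
  have hsplit := deg_split (p := p) (N := N) x
  have hNN : N ≤ N ^ 2 := by nlinarith
  have key : (N ^ 2 - N) * (p - 1) + N ≤ N ^ 2 * (p - 1) := by
    have h1 : N ≤ N * (p - 1) := Nat.le_mul_of_pos_right N (by omega)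
    calc (N ^ 2 - N) * (p - 1) + N ≤ (N ^ 2 - N) * (p - 1) + N * (p - 1) :=
          Nat.add_le_add_left h1 _
      _ = (N ^ 2 - N + N) * (p - 1) := (Nat.add_mul _ _ _).symm
      _ = N ^ 2 * (p - 1) := by rw [Nat.sub_add_cancel hNN]
  have h5 : (N ^ 2 - N) * (p - 1) + N ≤ indDeg (AA p N) x + indDeg (BB p N) x := by
    rw [hsplit]; exact key.trans htot
  have h6 : (N ^ 2 - N) * (p - 1) + N ≤ N + indDeg (BB p N) x :=
    h5.trans (Nat.add_le_add_right hcross _)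
  rw [Nat.add_comm N (indDeg (BB p N) x)] at h6
  exact Nat.le_of_add_le_add_right h6

end Aux2
section Aux3

variable {p : ℕ} [NeZero p]

private def xstar (p N : ℕ) [NeZero p] (hN : 0 < N) : Fin (N ^ 2) → ZMod p :=
  fun c => if ((gridE N).symm c).1 = ⟨0, hN⟩ then 0 else 1

private lemma xstar_mem {N : ℕ} (hN : 0 < N) : xstar p N hN ∈ AA p N := by
  rw [mem_AA]
  exact ⟨⟨0, hN⟩, fun i => by rw [xstar, if_pos (grid_symm_fst _ i)]⟩

private lemma ubA {N : ℕ} (hN : 0 < N) (hp2 : 1 < p) :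
    indDeg (AA p N) (xstar p N hN) ≤ (N ^ 2 - N) * (p - 1) := by
  haveI : Fact (1 < p) := ⟨hp2⟩
  have h := indDeg_le_card_mul (n := N ^ 2) (by positivity) (AA p N) (xstar p N hN)
    (Finset.univ.filter fun c => ¬((gridE N).symm c).1 = ⟨0, hN⟩) ?_
  · rwa [card_offRow] at h
  · intro y hy hd1 c hc
    rw [Finset.mem_filter]
    refine ⟨Finset.mem_univ _, fun hcj => ?_⟩
    obtain ⟨j, hj⟩ := mem_AA.mp hy
    obtain ⟨c₀, hc₀, hupd⟩ := hd_one hd1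
    have hcc0 : c = c₀ := by
      by_contra hne
      apply hc
      have h2 := congrFun hupd c
      rw [Function.update_of_ne hne] at h2
      exact h2
    by_cases hj0 : j = ⟨0, hN⟩
    · apply hc
      have hcg : gridE N (j, ((gridE N).symm c).2) = c := by
        rw [hj0, ← hcj]; exact grid_eta c
      have h3 : y c = 0 := by rw [← hcg]; exact hj _
      rw [h3, xstar, if_pos hcj]
    · have hcg : gridE N (j, ⟨0, hN⟩) ≠ c := by
        intro hh
        apply hj0
        rw [← hh] at hcj
        rw [← hcj]
        exact (grid_symm_fst j _).symm
      have h2 := congrFun hupd (gridE N (j, ⟨0, hN⟩))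
      rw [hcc0] at hcg
      rw [Function.update_of_ne hcg] at h2
      have h3 : y (gridE N (j, ⟨0, hN⟩)) = 0 := hj _
      rw [h3, xstar, if_neg (by rw [grid_symm_fst]; exact hj0)] at h2
      exact one_ne_zero h2.symm

private lemma minDeg_AA {N : ℕ} (hN : 0 < N) (hp2 : 1 < p) :
    minDeg (AA p N) = (((N ^ 2 - N) * (p - 1) : ℕ) : ℕ∞) := by
  apply le_antisymm
  · calc minDeg (AA p N) ≤ (indDeg (AA p N) (xstar p N hN) : ℕ∞) :=
          Finset.inf_le (xstar_mem hN)
      _ ≤ (((N ^ 2 - N) * (p - 1) : ℕ) : ℕ∞) := by exact_mod_cast ubA hN hp2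
  · apply Finset.le_inf
    intro v hv
    exact_mod_cast lbAA v hv

private lemma minDeg_BB {N : ℕ} (hN : 0 < N) (hp3 : 3 ≤ p) :
    (((N ^ 2 - N) * (p - 1) : ℕ) : ℕ∞) ≤ minDeg (BB p N) := by
  apply Finset.le_inf
  intro v hv
  exact_mod_cast lbBB hN hp3 v hv

/-! characters -/

private lemma hprim (p : ℕ) [NeZero p] : IsPrimitiveRoot (primRoot p) p := by
  have h := Complex.isPrimitiveRoot_exp p (NeZero.ne p)
  have : primRoot p = Complex.exp (2 * ↑Real.pi * Complex.I / ↑p) := by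
    rw [primRoot]
  rwa [this]

private lemma chi_pow_mod (m : ℕ) : primRoot p ^ (m % p) = primRoot p ^ m := by
  conv_rhs => rw [← Nat.mod_add_div m p]
  rw [pow_add, pow_mul, (hprim p).pow_eq_one, one_pow, mul_one]

private lemma chi_add (a b : ZMod p) :
    primRoot p ^ (a + b).val = primRoot p ^ a.val * primRoot p ^ b.val := by
  rw [← pow_add, ZMod.val_add, chi_pow_mod]

private lemma chi_sum {ι : Type*} (s : Finset ι) (f : ι → ZMod p) :
    primRoot p ^ (∑ i ∈ s, f i).val = ∏ i ∈ s, primRoot p ^ (f i).val := by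
  classical
  induction s using Finset.cons_induction with
  | empty => simp [ZMod.val_zero]
  | cons a s ha ih =>
    rw [Finset.sum_cons, Finset.prod_cons, chi_add, ih]

private lemma sum_chi (hp2 : 1 < p) : ∑ a : ZMod p, primRoot p ^ a.val = 0 := by
  have h := (hprim p).geom_sum_eq_zero hp2
  rw [← h]
  apply Finset.sum_nbij (fun a : ZMod p => a.val)
  · intro a _; exact Finset.mem_range.mpr (ZMod.val_lt a)
  · exact (ZMod.val_injective p).injOn
  · intro i hi
    simp only [Finset.coe_range, Set.mem_Iio] at hi
    exact ⟨(i : ZMod p), by simp, ZMod.val_cast_of_lt hi⟩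
  · intro a _; rfl

private lemma sum_chi_fun {M : ℕ} (hM : 0 < M) (hp2 : 1 < p) :
    ∑ r : Fin M → ZMod p, primRoot p ^ (∑ i, r i).val = 0 := by
  rw [Finset.sum_congr rfl (fun r _ => chi_sum Finset.univ r)]
  rw [← Fintype.piFinset_univ]
  have hps := Finset.prod_univ_sum (fun _ : Fin M => (Finset.univ : Finset (ZMod p)))
    (fun _ a => primRoot p ^ a.val)
  rw [← hps]
  exact Finset.prod_eq_zero (Finset.mem_univ (⟨0, hM⟩ : Fin M)) (sum_chi hp2)

end Aux3
section Aux4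

variable {p : ℕ} [NeZero p]

private def qE (p N : ℕ) [NeZero p] : (Fin N → Fin N → ZMod p) ≃ (Fin (N ^ 2) → ZMod p) where
  toFun g c := g ((gridE N).symm c).1 ((gridE N).symm c).2
  invFun x j i := x (gridE N (j, i))
  left_inv g := by
    funext j i
    show g ((gridE N).symm (gridE N (j, i))).1 ((gridE N).symm (gridE N (j, i))).2 = g j i
    rw [Equiv.symm_apply_apply]
  right_inv x := by
    funext c
    show x (gridE N (((gridE N).symm c).1, ((gridE N).symm c).2)) = x c
    rw [grid_eta]

private lemma qE_row {N : ℕ} (g : Fin N → Fin N → ZMod p) (j i : Fin N) :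
    qE p N g (gridE N (j, i)) = g j i := by
  show g ((gridE N).symm (gridE N (j, i))).1 ((gridE N).symm (gridE N (j, i))).2 = g j i
  rw [Equiv.symm_apply_apply]

private lemma qE_sum {N : ℕ} (g : Fin N → Fin N → ZMod p) :
    ∑ c, qE p N g c = ∑ j, ∑ i, g j i := by
  rw [← Equiv.sum_comp (gridE N) (fun c => qE p N g c), Fintype.sum_prod_type]
  exact Finset.sum_congr rfl fun j _ => Finset.sum_congr rfl fun i _ => qE_row g j i

/-- the inner sum over a single row -/
private lemma row_sum {N : ℕ} (hN : 0 < N) (hp2 : 1 < p) :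
    ∑ r : Fin N → ZMod p,
      (1 - if (∀ i, r i = 0) then (1 : ℂ) else 0) * primRoot p ^ (∑ i, r i).val
      = -1 := by
  simp only [sub_mul, one_mul, ite_mul, zero_mul]
  rw [Finset.sum_sub_distrib, sum_chi_fun hN hp2]
  have hcond : ∀ r : Fin N → ZMod p, (∀ i, r i = 0) ↔ r = 0 := by
    intro r
    rw [funext_iff]
    rfl
  have : ∑ r : Fin N → ZMod p,
      (if (∀ i, r i = 0) then primRoot p ^ (∑ i, r i).val else 0)
      = ∑ r : Fin N → ZMod p,
      (if r = 0 then primRoot p ^ (∑ i, r i).val else 0) := by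
    exact Finset.sum_congr rfl fun r _ => by rw [if_congr (hcond r) rfl rfl]
  rw [this, Finset.sum_ite_eq' Finset.univ (0 : Fin N → ZMod p)]
  simp [ZMod.val_zero]

private lemma sumA {N : ℕ} (hN : 0 < N) (hp2 : 1 < p) :
    ∑ x ∈ AA p N, primRoot p ^ (∑ c, x c).val = -(-1 : ℂ) ^ N := by
  set f : (Fin (N ^ 2) → ZMod p) → ℂ := fun x => primRoot p ^ (∑ c, x c).val with hf
  have hTot : ∑ x : Fin (N ^ 2) → ZMod p, f x = 0 := sum_chi_fun (by positivity) hp2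
  -- the complementary sum
  have hT : ∑ x : Fin (N ^ 2) → ZMod p,
      (∏ j : Fin N, (1 - if (∀ i : Fin N, x (gridE N (j, i)) = 0) then (1 : ℂ) else 0)) * f x
      = (-1 : ℂ) ^ N := by
    rw [← Equiv.sum_comp (qE p N)]
    have hterm : ∀ g : Fin N → Fin N → ZMod p,
        (∏ j : Fin N, (1 - if (∀ i : Fin N, qE p N g (gridE N (j, i)) = 0)
            then (1 : ℂ) else 0)) * f (qE p N g)
        = ∏ j : Fin N,
            ((1 - if (∀ i, g j i = 0) then (1 : ℂ) else 0) * primRoot p ^ (∑ i, g j i).val) := by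
      intro g
      rw [Finset.prod_mul_distrib]
      congr 1
      · exact Finset.prod_congr rfl fun j _ => by
          congr 1
          exact if_congr (forall_congr' fun i => by rw [qE_row]) rfl rfl
      · rw [hf]
        show primRoot p ^ (∑ c, qE p N g c).val = _
        rw [qE_sum, chi_sum]
    rw [Finset.sum_congr rfl fun g _ => hterm g]
    rw [← Fintype.piFinset_univ]
    have hps := Finset.prod_univ_sum (fun _ : Fin N => (Finset.univ : Finset (Fin N → ZMod p)))
      (fun _ r => (1 - if (∀ i, r i = 0) then (1 : ℂ) else 0) * primRoot p ^ (∑ i, r i).val)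
    rw [← hps, row_sum hN hp2]
    simp
  -- indicator identity
  have hfilter : Finset.univ.filter (· ∈ AA p N) = AA p N := by ext y; simp
  have hind : ∑ x ∈ Finset.univ.filter (fun x => ¬ x ∈ AA p N), f x
      = ∑ x : Fin (N ^ 2) → ZMod p,
        (∏ j : Fin N, (1 - if (∀ i : Fin N, x (gridE N (j, i)) = 0) then (1 : ℂ) else 0)) * f x := by
    rw [Finset.sum_filter]
    refine Finset.sum_congr rfl fun x _ => ?_
    by_cases hx : x ∈ AA p N
    · rw [if_neg (by simpa using hx)]
      obtain ⟨j, hj⟩ := mem_AA.mp hx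
      rw [Finset.prod_eq_zero (Finset.mem_univ j), zero_mul]
      rw [if_pos hj]
      ring
    · rw [if_pos hx]
      have : (∏ j : Fin N, (1 - if (∀ i : Fin N, x (gridE N (j, i)) = 0)
          then (1 : ℂ) else 0)) = 1 := by
        apply Finset.prod_eq_one
        intro j _
        rw [if_neg (fun hh => hx (mem_AA.mpr ⟨j, hh⟩))]
        ring
      rw [this, one_mul]
  have hsum := Finset.sum_filter_add_sum_filter_not Finset.univ (· ∈ AA p N) f
  rw [hfilter, hind, hT, hTot] at hsum
  linear_combination hsum

end Aux4
theorem stmt15 (p : ℕ) [NeZero p] (hp : p.Prime) (hp3 : 3 ≤ p)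
    (N : ℕ) (hN : 0 < N) (hdvd : p * (p - 1) ∣ N) :
    ∃ V : ZMod p → Finset (Fin (N ^ 2) → ZMod p),
      (∀ x : Fin (N ^ 2) → ZMod p, ∃! k : ZMod p, x ∈ V k) ∧
      (∑ k : ZMod p, ((rho p (N ^ 2) V k).card : ℂ) * primRoot p ^ k.val) ≠ 0 ∧
      (((p - 1) * N ^ 2 : ℕ) : ℕ∞) -
          Finset.univ.inf (fun k : ZMod p => minDeg (V k)) =
        (((p - 1) * N : ℕ) : ℕ∞) := by
  have hp2 : 1 < p := by omega
  haveI : Fact (1 < p) := ⟨hp2⟩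
  set V : ZMod p → Finset (Fin (N ^ 2) → ZMod p) :=
    fun k => if k = 0 then AA p N else if k = 1 then BB p N else ∅ with hV
  have h01 : (0 : ZMod p) ≠ 1 := fun h => one_ne_zero (α := ZMod p) h.symm
  have hV0 : V 0 = AA p N := by simp [hV]
  have hV1 : V 1 = BB p N := by
    simp [hV, fun h : (1 : ZMod p) = 0 => h01 h.symm]
  have hVk : ∀ k : ZMod p, k ≠ 0 → k ≠ 1 → V k = ∅ := by
    intro k hk0 hk1
    simp [hV, hk0, hk1]
  have memV : ∀ (x : Fin (N ^ 2) → ZMod p) (k : ZMod p),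
      x ∈ V k ↔ k = (if x ∈ AA p N then (0 : ZMod p) else 1) := by
    intro x k
    by_cases hk0 : k = 0
    · subst hk0
      rw [hV0]
      by_cases hx : x ∈ AA p N
      · simp [hx]
      · simp [hx, h01]
    · by_cases hk1 : k = 1
      · subst hk1
        rw [hV1, mem_BB]
        by_cases hx : x ∈ AA p N
        · simp [hx, fun h : (1 : ZMod p) = 0 => h01 h.symm]
        · simp [hx]
      · rw [hVk k hk0 hk1]
        by_cases hx : x ∈ AA p N <;> simp [hx, hk0, hk1]
  refine ⟨V, ?_, ?_, ?_⟩
  · -- partition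
    intro x
    exact ⟨if x ∈ AA p N then 0 else 1, (memV x _).mpr rfl, fun k hk => (memV x k).mp hk⟩
  · -- rho sum nonzero
    have hTot : ∑ x : Fin (N ^ 2) → ZMod p, primRoot p ^ (∑ c, x c).val = 0 :=
      sum_chi_fun (by positivity) hp2
    have hfilter : Finset.univ.filter (· ∈ AA p N) = AA p N := by ext y; simp
    have hsplit := Finset.sum_filter_add_sum_filter_not Finset.univ (· ∈ AA p N)
      (fun x => primRoot p ^ (∑ c, x c).val)
    rw [hfilter, hTot] at hsplit
    have hcard : ∀ k : ZMod p, ((rho p (N ^ 2) V k).card : ℂ)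
        = ∑ x : Fin (N ^ 2) → ZMod p, (if x ∈ V (k - ∑ i, x i) then (1 : ℂ) else 0) := by
      intro k
      rw [rho, Finset.card_filter, Nat.cast_sum]
      exact Finset.sum_congr rfl fun x _ => by
        by_cases h : x ∈ V (k - ∑ i, x i) <;> simp [h]
    have step : ∑ k : ZMod p, ((rho p (N ^ 2) V k).card : ℂ) * primRoot p ^ k.val
        = (1 - primRoot p) * ∑ x ∈ AA p N, primRoot p ^ (∑ c, x c).val := by
      calc ∑ k : ZMod p, ((rho p (N ^ 2) V k).card : ℂ) * primRoot p ^ k.val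
          = ∑ k : ZMod p, ∑ x : Fin (N ^ 2) → ZMod p,
            (if x ∈ V (k - ∑ i, x i) then primRoot p ^ k.val else 0) := by
            refine Finset.sum_congr rfl fun k _ => ?_
            rw [hcard k, Finset.sum_mul]
            exact Finset.sum_congr rfl fun x _ => by rw [ite_mul, one_mul, zero_mul]
        _ = ∑ x : Fin (N ^ 2) → ZMod p, ∑ k : ZMod p,
            (if x ∈ V (k - ∑ i, x i) then primRoot p ^ k.val else 0) := Finset.sum_comm
        _ = ∑ x : Fin (N ^ 2) → ZMod p,
            primRoot p ^ (((if x ∈ AA p N then (0 : ZMod p) else 1) + ∑ i, x i)).val := by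
            refine Finset.sum_congr rfl fun x _ => ?_
            have hiff : ∀ k : ZMod p, (x ∈ V (k - ∑ i, x i))
                ↔ k = (if x ∈ AA p N then (0 : ZMod p) else 1) + ∑ i, x i := by
              intro k
              rw [memV, sub_eq_iff_eq_add]
            rw [Finset.sum_congr rfl fun k _ => if_congr (hiff k) rfl rfl]
            rw [Finset.sum_ite_eq' Finset.univ, if_pos (Finset.mem_univ _)]
        _ = ∑ x : Fin (N ^ 2) → ZMod p,
            primRoot p ^ ((if x ∈ AA p N then (0 : ZMod p) else 1)).val
              * primRoot p ^ (∑ i, x i).val := by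
            exact Finset.sum_congr rfl fun x _ => chi_add _ _
        _ = (1 - primRoot p) * ∑ x ∈ AA p N, primRoot p ^ (∑ c, x c).val := by
            rw [← Finset.sum_filter_add_sum_filter_not Finset.univ (· ∈ AA p N)]
            rw [hfilter]
            have e1 : ∑ x ∈ AA p N,
                primRoot p ^ ((if x ∈ AA p N then (0 : ZMod p) else 1)).val
                  * primRoot p ^ (∑ i, x i).val
                = ∑ x ∈ AA p N, primRoot p ^ (∑ c, x c).val := by
              refine Finset.sum_congr rfl fun x hx => ?_
              rw [if_pos hx, ZMod.val_zero, pow_zero, one_mul]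
            have e2 : ∑ x ∈ Finset.univ.filter (fun x => ¬ x ∈ AA p N),
                primRoot p ^ ((if x ∈ AA p N then (0 : ZMod p) else 1)).val
                  * primRoot p ^ (∑ i, x i).val
                = primRoot p * ∑ x ∈ Finset.univ.filter (fun x => ¬ x ∈ AA p N),
                    primRoot p ^ (∑ c, x c).val := by
              rw [Finset.mul_sum]
              refine Finset.sum_congr rfl fun x hx => ?_
              rw [Finset.mem_filter] at hx
              rw [if_neg hx.2, ZMod.val_one, pow_one]
            rw [e1, e2]
            have e3 : ∑ x ∈ Finset.univ.filter (fun x => ¬ x ∈ AA p N),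
                primRoot p ^ (∑ c, x c).val
                = -∑ x ∈ AA p N, primRoot p ^ (∑ c, x c).val := by
              linear_combination hsplit
            rw [e3]
            ring
    rw [step, sumA hN hp2]
    apply mul_ne_zero
    · exact sub_ne_zero.mpr (Ne.symm ((hprim p).ne_one hp2))
    · exact neg_ne_zero.mpr (pow_ne_zero _ (neg_ne_zero.mpr one_ne_zero))
  · -- degree condition
    have hminA := minDeg_AA (p := p) hN hp2
    have hminB := minDeg_BB (p := p) hN hp3
    have hinf : Finset.univ.inf (fun k : ZMod p => minDeg (V k))
        = (((N ^ 2 - N) * (p - 1) : ℕ) : ℕ∞) := by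
      apply le_antisymm
      · refine le_trans (Finset.inf_le (Finset.mem_univ (0 : ZMod p))) ?_
        rw [hV0, hminA]
      · apply Finset.le_inf
        intro k _
        by_cases hk0 : k = 0
        · subst hk0; rw [hV0, hminA]
        · by_cases hk1 : k = 1
          · subst hk1; rw [hV1]; exact hminB
          · rw [hVk k hk0 hk1, minDeg, Finset.inf_empty]
            exact le_top
    rw [hinf]
    have hNN : N ≤ N ^ 2 := by nlinarith
    have harith : (p - 1) * N ^ 2 = (p - 1) * N + (N ^ 2 - N) * (p - 1) := by
      rw [Nat.mul_comm (N ^ 2 - N) (p - 1), ← Nat.mul_add, Nat.add_sub_cancel' hNN]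
    have h7 : (p - 1) * N ^ 2 - (N ^ 2 - N) * (p - 1) = (p - 1) * N := by
      rw [harith, Nat.add_sub_cancel]
    exact_mod_cast h7
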